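/- Let G be a connected graph with minimum degree at least 3. If G has a cut edge (bridge), then Z(G) ≥ 4 (equivalently, Z(G) = 3 implies G has no cut edge). -/

import Mathlib

open Matrix Finset

variable {V : Type*}

/-- `A` is a real symmetric matrix whose off-diagonal nonzero pattern is given by `G`. -/
def IsGraphMatrix [Fintype V] (G : SimpleGraph V) (A : Matrix V V ℝ) : Prop :=
  A.IsSymm ∧ ∀ i j : V, i ≠ j → (A i j ≠ 0 ↔ G.Adj i j)

/-- The nullity of a square real matrix. -/
noncomputable def nullity [Fintype V] (A : Matrix V V ℝ) : ℕ :=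
  Fintype.card V - A.rank

/-- The minimum rank of a graph. -/
noncomputable def minRank [Fintype V] (G : SimpleGraph V) : ℕ :=
  sInf {r : ℕ | ∃ A : Matrix V V ℝ, IsGraphMatrix G A ∧ A.rank = r}

/-- The maximum nullity of a graph. -/
noncomputable def maxNullity [Fintype V] (G : SimpleGraph V) : ℕ :=
  sSup {k : ℕ | ∃ A : Matrix V V ℝ, IsGraphMatrix G A ∧ nullity A = k}

/-- The set of vertices eventually colored black by the color-change rule,
starting from the initially black set `Z`. A black vertex `u` with exactly one
white neighbor `v` forces `v` black. -/
inductive ZForced (G : SimpleGraph V) (Z : Set V) : V → Prop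
  | init : ∀ {v}, v ∈ Z → ZForced G Z v
  | force : ∀ {u v}, G.Adj u v → ZForced G Z u →
      (∀ w, G.Adj u w → w ≠ v → ZForced G Z w) → ZForced G Z v

/-- `Z` is a zero forcing set for `G`. -/
def IsZeroForcingSet (G : SimpleGraph V) (Z : Set V) : Prop :=
  ∀ v : V, ZForced G Z v

/-- The zero forcing number of `G`. -/
noncomputable def zeroForcingNumber [Fintype V] (G : SimpleGraph V) : ℕ :=
  sInf {k : ℕ | ∃ Z : Finset V, Z.card = k ∧ IsZeroForcingSet G ↑Z}

section AuxZF

open SimpleGraph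

/-- If `S` is a set of vertices all of whose out-neighbors lie in `S ∪ {y}`,
the initial set avoids `S`, and `y` has at least two distinct neighbors in `S`,
then no vertex of `S` can ever be forced. -/
lemma zf_not_forced_aux (G : SimpleGraph V) (Z : Set V) (S : Set V) (y : V)
    (h1 : ∀ w ∈ S, ∀ z, G.Adj w z → z ∈ S ∨ z = y)
    (h2 : ∃ w₁ ∈ S, ∃ w₂ ∈ S, w₁ ≠ w₂ ∧ G.Adj y w₁ ∧ G.Adj y w₂)
    (h3 : ∀ z ∈ Z, z ∉ S) :
    ∀ v, ZForced G Z v → v ∉ S := by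
  intro v hv
  induction hv with
  | init h => exact h3 _ h
  | @force u v hadj hu hws ih_u ih_ws =>
    intro hvS
    rcases h1 v hvS u hadj.symm with huS | rfl
    · exact ih_u huS
    · obtain ⟨w₁, hw₁, w₂, hw₂, hne, ha₁, ha₂⟩ := h2
      by_cases hvw : v = w₁
      · exact ih_ws w₂ ha₂ (fun h => hne (h.trans hvw).symm) hw₂
      · exact ih_ws w₁ ha₁ (fun h => hvw h.symm) hw₁

/-- If some vertex outside `Z` is forced, then there is a "first force": a black
vertex `u` all of whose neighbors except one (`v'`) are initially black. -/
lemma zf_exists_first_force (G : SimpleGraph V) (Z : Set V) {v₀ : V}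
    (hv₀ : ZForced G Z v₀) (hv₀Z : v₀ ∉ Z) :
    ∃ u v', u ∈ Z ∧ v' ∉ Z ∧ G.Adj u v' ∧ ∀ w, G.Adj u w → w ≠ v' → w ∈ Z := by
  have key : ∀ v, ZForced G Z v → v ∈ Z ∨
      ∃ u v', u ∈ Z ∧ v' ∉ Z ∧ G.Adj u v' ∧ ∀ w, G.Adj u w → w ≠ v' → w ∈ Z := by
    intro v hv
    induction hv with
    | init h => exact Or.inl h
    | @force u v hadj hu hws ih_u ih_ws =>
      rcases ih_u with huZ | hP
      · by_cases hvZ : v ∈ Z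
        · exact Or.inl hvZ
        · by_cases hall : ∀ w, G.Adj u w → w ≠ v → w ∈ Z
          · exact Or.inr ⟨u, v, huZ, hvZ, hadj, hall⟩
          · push_neg at hall
            obtain ⟨w, hw1, hw2, hw3⟩ := hall
            rcases ih_ws w hw1 hw2 with h | h
            · exact absurd h hw3
            · exact Or.inr h
      · exact Or.inr hP
  rcases key v₀ hv₀ with h | h
  · exact absurd h hv₀Z
  · exact h

/-- Walking in `G`, every vertex ends up on the side of `x` or the side of `y`
(with respect to the graph `H` obtained by deleting the edge `xy`). -/
lemma zf_walk_side {G H : SimpleGraph V} {x y : V}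
    (hHadj : ∀ v w, G.Adj v w → H.Adj v w ∨ (v = x ∧ w = y) ∨ (v = y ∧ w = x)) :
    ∀ {v w : V}, G.Walk v w → (H.Reachable w x ∨ H.Reachable w y) →
      (H.Reachable v x ∨ H.Reachable v y) := by
  intro v w p
  induction p with
  | nil => exact id
  | cons h p ih =>
    intro hc
    rcases hHadj _ _ h with h' | ⟨rfl, rfl⟩ | ⟨rfl, rfl⟩
    · rcases ih hc with h2 | h2
      · exact Or.inl (h'.reachable.trans h2)
      · exact Or.inr (h'.reachable.trans h2)
    · exact Or.inl (Reachable.refl _)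
    · exact Or.inr (Reachable.refl _)

/-- Key contradiction: if the initial black set `Z` consists of `u` together with
neighbors of `u`, the edge `xy` is a bridge, and `u` lies on the side of `x`,
then the far side of `y` (minus `y`) can never be forced. -/
lemma zf_side_contradiction [Fintype V] [DecidableEq V]
    {G H : SimpleGraph V} [DecidableRel G.Adj] {x y u : V} {Z : Set V}
    (hdeg : ∀ v : V, 3 ≤ G.degree v)
    (hHadj : ∀ v w, G.Adj v w → H.Adj v w ∨ (v = x ∧ w = y) ∨ (v = y ∧ w = x))
    (hnr : ¬ H.Reachable x y)
    (hforce : IsZeroForcingSet G Z)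
    (hZ : ∀ z ∈ Z, z = u ∨ G.Adj u z)
    (hux : H.Reachable u x) : False := by
  classical
  set S : Set V := {v | H.Reachable v y ∧ v ≠ y} with hS
  have hxny : x ≠ y := fun h => hnr (h ▸ Reachable.refl x)
  -- two distinct neighbors of `y`, both different from `x`, lie in `S`
  have hcard : 1 < ((G.neighborFinset y).erase x).card := by
    have h1 : (G.neighborFinset y).card - 1 ≤ ((G.neighborFinset y).erase x).card :=
      Finset.pred_card_le_card_erase
    have h2 : (G.neighborFinset y).card = G.degree y := G.card_neighborFinset_eq_degree y
    have := hdeg y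
    omega
  obtain ⟨w₁, hw₁, w₂, hw₂, hwne⟩ := Finset.one_lt_card.mp hcard
  have hmemS : ∀ w ∈ (G.neighborFinset y).erase x, w ∈ S := by
    intro w hw
    obtain ⟨hwx, hwn⟩ := Finset.mem_erase.mp hw
    have hadj : G.Adj y w := by simpa using hwn
    rcases hHadj y w hadj with h' | ⟨hyx, _⟩ | ⟨_, hwx'⟩
    · exact ⟨h'.symm.reachable, fun h => G.irrefl (h ▸ hadj)⟩
    · exact absurd hyx.symm hxny
    · exact absurd hwx' hwx
  have hadj₁ : G.Adj y w₁ := by simpa using (Finset.mem_erase.mp hw₁).2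
  have hadj₂ : G.Adj y w₂ := by simpa using (Finset.mem_erase.mp hw₂).2
  have h1 : ∀ w ∈ S, ∀ z, G.Adj w z → z ∈ S ∨ z = y := by
    intro w hw z hadj
    rcases hHadj w z hadj with h' | ⟨hwx, hzy⟩ | ⟨hwy, _⟩
    · by_cases hzy : z = y
      · exact Or.inr hzy
      · exact Or.inl ⟨h'.symm.reachable.trans hw.1, hzy⟩
    · exact absurd (hwx ▸ hw.1) hnr
    · exact absurd hwy hw.2
  have h3 : ∀ z ∈ Z, z ∉ S := by
    intro z hz hzS
    rcases hZ z hz with rfl | hadj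
    · exact hnr (hux.symm.trans hzS.1)
    · rcases hHadj u z hadj with h' | ⟨_, hzy⟩ | ⟨huy, _⟩
      · exact hnr (((h'.symm.reachable.trans hux)).symm.trans hzS.1)
      · exact hzS.2 hzy
      · exact hnr (huy ▸ hux).symm
  exact zf_not_forced_aux G Z S y h1
    ⟨w₁, hmemS w₁ hw₁, w₂, hmemS w₂ hw₂, hwne, hadj₁, hadj₂⟩ h3 w₁ (hforce w₁)
    (hmemS w₁ hw₁)

end AuxZF

/-- If `G` is connected with minimum degree at least `3` and has a cut edge
(bridge), then `Z(G) ≥ 4`. -/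
theorem four_le_zeroForcingNumber_of_bridge {V : Type*} [Fintype V] [DecidableEq V]
    (G : SimpleGraph V) [DecidableRel G.Adj]
    (hconn : G.Connected) (hdeg : ∀ v : V, 3 ≤ G.degree v)
    (hbridge : ∃ e : Sym2 V, G.IsBridge e) :
    4 ≤ zeroForcingNumber G := by
  classical
  obtain ⟨e, he⟩ := hbridge
  obtain ⟨x, y, hxy, hnr⟩ : ∃ x y : V, G.Adj x y ∧
      ¬(G \ SimpleGraph.fromEdgeSet {s(x, y)}).Reachable x y := by
    revert he
    induction e using Sym2.ind with
    | _ a b =>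
      intro he
      exact ⟨a, b, he.reachable_iff_adj.mp (hconn a b), SimpleGraph.isBridge_iff.mp he⟩
  set H := G \ SimpleGraph.fromEdgeSet {s(x, y)} with hH
  have hHadj : ∀ v w, G.Adj v w → H.Adj v w ∨ (v = x ∧ w = y) ∨ (v = y ∧ w = x) := by
    intro v w h
    by_cases hc : s(v, w) = s(x, y)
    · exact Or.inr (Sym2.eq_iff.mp hc)
    · refine Or.inl ?_
      rw [hH, SimpleGraph.sdiff_adj]
      exact ⟨h, by simp [SimpleGraph.fromEdgeSet_adj, hc]⟩
  have main : ∀ Z : Finset V, IsZeroForcingSet G ↑Z → 4 ≤ Z.card := by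
    intro Z hZf
    by_contra hlt
    push_neg at hlt
    have hcard3 : Z.card ≤ 3 := by omega
    have hV4 : 4 ≤ Fintype.card V := by
      have h1 : (insert x (G.neighborFinset x)).card ≤ Fintype.card V := by
        rw [← Finset.card_univ]; exact Finset.card_le_card (Finset.subset_univ _)
      have h2 : (insert x (G.neighborFinset x)).card = G.degree x + 1 := by
        rw [Finset.card_insert_of_notMem (by simp), G.card_neighborFinset_eq_degree]
      have := hdeg x; omega
    obtain ⟨v₀, hv₀⟩ : ∃ v₀, v₀ ∉ Z := by
      by_contra hall
      push_neg at hall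
      have hsub : (Finset.univ : Finset V) ⊆ Z := fun v _ => hall v
      have := Finset.card_le_card hsub
      rw [Finset.card_univ] at this
      omega
    obtain ⟨u, v', huZ, hv'Z, hadj, hN⟩ :=
      zf_exists_first_force G ↑Z (hZf v₀) (by simpa using hv₀)
    have huZ' : u ∈ Z := by simpa using huZ
    have hZstruct : ∀ z ∈ (↑Z : Set V), z = u ∨ G.Adj u z := by
      have hsub : insert u ((G.neighborFinset u).erase v') ⊆ Z := by
        intro z hz
        rcases Finset.mem_insert.mp hz with rfl | hz
        · exact huZ'
        · obtain ⟨hzv, hzn⟩ := Finset.mem_erase.mp hz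
          have := hN z (by simpa using hzn) hzv
          simpa using this
      have hc1 : 3 ≤ (insert u ((G.neighborFinset u).erase v')).card := by
        rw [Finset.card_insert_of_notMem (by simp)]
        have hmem : v' ∈ G.neighborFinset u := by simpa using hadj
        rw [Finset.card_erase_of_mem hmem, G.card_neighborFinset_eq_degree]
        have := hdeg u; omega
      have heq : insert u ((G.neighborFinset u).erase v') = Z :=
        Finset.eq_of_subset_of_card_le hsub (by omega)
      intro z hz
      have hz' : z ∈ Z := hz
      rw [← heq] at hz'
      rcases Finset.mem_insert.mp hz' with rfl | hz'
      · exact Or.inl rfl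
      · exact Or.inr (by simpa using (Finset.mem_erase.mp hz').2)
    rcases zf_walk_side hHadj (hconn u x).some (Or.inl (SimpleGraph.Reachable.refl x))
      with hside | hside
    · exact zf_side_contradiction hdeg hHadj hnr hZf hZstruct hside
    · have hHadj' : ∀ v w, G.Adj v w → H.Adj v w ∨ (v = y ∧ w = x) ∨ (v = x ∧ w = y) :=
        fun v w h => (hHadj v w h).imp_right Or.symm
      have hnr' : ¬ H.Reachable y x := fun h => hnr h.symm
      exact zf_side_contradiction hdeg hHadj' hnr' hZf hZstruct hside
  have hne : {k : ℕ | ∃ Z : Finset V, Z.card = k ∧ IsZeroForcingSet G ↑Z}.Nonempty :=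
    ⟨(Finset.univ : Finset V).card, Finset.univ, rfl, fun v => ZForced.init (by simp)⟩
  exact le_csInf hne (by rintro k ⟨Z, rfl, hZ⟩; exact main Z hZ)
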